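/- Let p < q be distinct primes and X a finite indecomposable cycle set of cardinality pq with cyclic permutation group. Then X has multipermutational level 1, i.e., all left multiplications σ_x coincide. -/

import Mathlib

/-- A cycle set: a set with bijective left multiplications `σ x`
satisfying `(x·y)·(x·z) = (y·x)·(y·z)`. -/
structure CycleSet (X : Type*) where
  σ : X → Equiv.Perm X
  cycl : ∀ x y z : X, σ (σ x y) (σ x z) = σ (σ y x) (σ y z)

namespace CycleSet

variable {X Y : Type*}

/-- The permutation group generated by the left multiplications. -/
def permGroup (S : CycleSet X) : Subgroup (Equiv.Perm X) :=
  Subgroup.closure (Set.range S.σ)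

/-- Indecomposability: the permutation group acts transitively. -/
def Transitive (S : CycleSet X) : Prop :=
  ∀ x y : X, ∃ g ∈ S.permGroup, g x = y

/-- The permutation group is abelian. -/
def AbelianPerm (S : CycleSet X) : Prop :=
  ∀ g ∈ S.permGroup, ∀ h ∈ S.permGroup, g * h = h * g

/-- `rel S n x y` holds iff `x` and `y` become equal in the `n`-th iterated
retraction `σ^n(X)`. -/
def rel (S : CycleSet X) : ℕ → X → X → Prop
  | 0 => Eq
  | n + 1 => fun x y => ∀ z, S.rel n (S.σ x z) (S.σ y z)

/-- The cardinality `|σ^n(X)|` of the `n`-th iterated retraction. -/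
noncomputable def retCard (S : CycleSet X) (n : ℕ) : ℕ :=
  Nat.card (Quot (S.rel n))

/-- `X` is multipermutational of level `m`: `m` is minimal with `|σ^m(X)| = 1`. -/
def MultipermLevel (S : CycleSet X) (m : ℕ) : Prop :=
  (∀ x y, S.rel m x y) ∧ ∀ k < m, ¬ (∀ x y, S.rel k x y)

/-- Isomorphism of cycle sets. -/
def Isomorphic (S : CycleSet X) (T : CycleSet Y) : Prop :=
  ∃ F : X → Y, Function.Bijective F ∧ ∀ x y, F (S.σ x y) = T.σ (F x) (F y)

end CycleSet

section Aux

variable {M : Type*} [CommGroup M] [Finite M]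

/-- The subgroup of elements acting on the left of arguments of `f` without
changing the value of `f`. -/
def perK (f : M → M) : Subgroup M where
  carrier := {a | ∀ x, f (a * x) = f x}
  one_mem' := by intro x; rw [one_mul]
  mul_mem' := by
    intro a b ha hb x
    rw [mul_assoc, ha, hb]
  inv_mem' := by
    intro a ha x
    have h := ha (a⁻¹ * x)
    rw [mul_inv_cancel_left] at h
    exact h.symm

lemma mem_perK {f : M → M} {a : M} : a ∈ perK f ↔ ∀ x, f (a * x) = f x := Iff.rfl

/-- The subgroup of elements `a` such that multiplication by `a` respects
the fibers of `f`. -/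
def Ngrp (f : M → M) : Subgroup M where
  carrier := {a | ∀ x y, f x = f y → f (a * x) = f (a * y)}
  one_mem' := by intro x y h; rwa [one_mul, one_mul]
  mul_mem' := by
    intro a b ha hb x y h
    rw [mul_assoc, mul_assoc]
    exact ha _ _ (hb x y h)
  inv_mem' := by
    intro a ha x y h
    have hpow : ∀ n : ℕ, ∀ x y : M, f x = f y → f (a ^ n * x) = f (a ^ n * y) := by
      intro n
      induction n with
      | zero => intro x y h; rwa [pow_zero, one_mul, one_mul]
      | succ n ih =>
        intro x y h
        have := ih (a * x) (a * y) (ha x y h)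
        rwa [← mul_assoc, ← mul_assoc, ← pow_succ] at this
    have h1 : a * a ^ (orderOf a - 1) = 1 := by
      rw [← pow_succ']
      rw [Nat.sub_add_cancel (orderOf_pos a)]
      exact pow_orderOf_eq_one a
    have h2 : a⁻¹ = a ^ (orderOf a - 1) := inv_eq_of_mul_eq_one_right h1
    rw [h2]
    exact hpow _ x y h

lemma step_all (f : M → M)
    (hf : ∀ x y, f (f x * y) * f x = f (f y * x) * f y)
    (hgen : Subgroup.closure (Set.range f) = ⊤) :
    ∀ (a x y : M), f x = f y → f (a * x) = f (a * y) := by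
  have hsub : Set.range f ⊆ (Ngrp f : Set M) := by
    rintro _ ⟨z, rfl⟩ x y h
    have h1 := hf x z
    have h2 := hf y z
    have key : f (f z * x) * f z = f (f z * y) * f z := by
      rw [← h1, h, h2]
    exact mul_right_cancel key
  have hle : (⊤ : Subgroup M) ≤ Ngrp f := by
    rw [← hgen]
    exact (Subgroup.closure_le _).mpr hsub
  exact fun a => hle (Subgroup.mem_top a)

lemma div_mem_perK (f : M → M)
    (hf : ∀ x y, f (f x * y) * f x = f (f y * x) * f y)
    (hgen : Subgroup.closure (Set.range f) = ⊤)
    {x y : M} (h : f x = f y) : x * y⁻¹ ∈ perK f := by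
  intro z
  have h1 := step_all f hf hgen (z * y⁻¹) x y h
  have e1 : z * y⁻¹ * y = z := inv_mul_cancel_right z y
  have e2 : z * y⁻¹ * x = x * y⁻¹ * z := by
    rw [mul_comm z y⁻¹, mul_comm x y⁻¹, mul_assoc, mul_assoc, mul_comm z x]
  rw [e1, e2] at h1
  exact h1

lemma const_of_top (f : M → M) (h : perK f = ⊤) (x y : M) : f x = f y := by
  have hm : x * y⁻¹ ∈ perK f := h ▸ Subgroup.mem_top _
  have := hm y
  rwa [inv_mul_cancel_right] at this

lemma const_of_bot (f : M → M)
    (hf : ∀ x y, f (f x * y) * f x = f (f y * x) * f y)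
    (hgen : Subgroup.closure (Set.range f) = ⊤)
    (h : perK f = ⊥) (x y : M) : f x = f y := by
  have hinj : Function.Injective f := by
    intro a b hab
    have hm := div_mem_perK f hf hgen hab
    rw [h, Subgroup.mem_bot] at hm
    exact mul_inv_eq_one.mp hm
  have hsurj : Function.Surjective f := Finite.surjective_of_injective hinj
  obtain ⟨b, hb⟩ := hsurj 1
  have key : ∀ x, f x = 1 := by
    intro x
    have h1 := hf x b
    rw [hb, mul_one, one_mul] at h1
    -- h1 : f (f x * b) * f x = f x
    have h2 : f (f x * b) = 1 := by
      have : f (f x * b) * f x = 1 * f x := by rw [h1, one_mul]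
      exact mul_right_cancel this
    have h3 : f x * b = b := hinj (h2.trans hb.symm)
    have : f x * b = 1 * b := by rw [h3, one_mul]
    exact mul_right_cancel this
  rw [key x, key y]

lemma const_of_prime (f : M → M)
    (hf : ∀ x y, f (f x * y) * f x = f (f y * x) * f y)
    (hgen : Subgroup.closure (Set.range f) = ⊤)
    (hp : (Nat.card M).Prime) : ∀ x y, f x = f y := by
  have hdvd : Nat.card (perK f) ∣ Nat.card M := Subgroup.card_subgroup_dvd_card _
  rcases (Nat.Prime.eq_one_or_self_of_dvd hp _ hdvd) with h | h
  · exact const_of_bot f hf hgen (Subgroup.card_eq_one.mp h)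
  · exact fun x y => const_of_top f ((Subgroup.card_eq_iff_eq_top _).mp (h.trans rfl)) x y

lemma const_of_pq (p q : ℕ) (hp : p.Prime) (hq : q.Prime) (hne : p ≠ q)
    (hcard : Nat.card M = p * q) (f : M → M)
    (hf : ∀ x y, f (f x * y) * f x = f (f y * x) * f y)
    (hgen : Subgroup.closure (Set.range f) = ⊤) : ∀ x y, f x = f y := by
  by_cases hbot : perK f = ⊥
  · exact const_of_bot f hf hgen hbot
  by_cases htop : perK f = ⊤
  · exact const_of_top f htop
  exfalso
  set K := perK f with hK
  -- constancy of f on K-cosets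
  have hKeq : ∀ a b : M, a⁻¹ * b ∈ K → f a = f b := by
    intro a b hab
    have h2 := hab a
    rw [mul_comm (a⁻¹ * b) a, mul_inv_cancel_left] at h2
    exact h2.symm
  -- the quotient map and induced map
  let π : M →* M ⧸ K := QuotientGroup.mk' K
  have hπs : Function.Surjective π := QuotientGroup.mk'_surjective K
  let θ : M ⧸ K → M ⧸ K := Quotient.map' f (by
    intro a b hab
    rw [QuotientGroup.leftRel_apply] at hab
    have : f a = f b := hKeq a b hab
    show (QuotientGroup.leftRel K) (f a) (f b)
    rw [QuotientGroup.leftRel_apply, this, inv_mul_cancel]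
    exact K.one_mem)
  have hθ : ∀ x : M, θ (π x) = π (f x) := fun x => rfl
  -- θ satisfies the same functional equation
  have hfθ : ∀ z w, θ (θ z * w) * θ z = θ (θ w * z) * θ w := by
    intro z w
    obtain ⟨x, rfl⟩ := hπs z
    obtain ⟨y, rfl⟩ := hπs w
    have e1 : θ (θ (π x) * π y) = π (f (f x * y)) := by
      rw [hθ, ← map_mul, hθ]
    have e2 : θ (θ (π y) * π x) = π (f (f y * x)) := by
      rw [hθ, ← map_mul, hθ]
    rw [e1, e2, hθ, hθ, ← map_mul, ← map_mul]
    exact congrArg π (hf x y)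
  -- θ has generating range
  have hgenθ : Subgroup.closure (Set.range θ) = ⊤ := by
    have h1 : Subgroup.map π (Subgroup.closure (Set.range f)) = ⊤ := by
      rw [hgen]; exact Subgroup.map_top_of_surjective π hπs
    rw [MonoidHom.map_closure] at h1
    have h2 : π '' Set.range f ⊆ Set.range θ := by
      rintro _ ⟨_, ⟨x, rfl⟩, rfl⟩
      exact ⟨π x, hθ x⟩
    exact eq_top_iff.mpr (h1 ▸ Subgroup.closure_mono h2)
  -- cardinality bookkeeping
  set m := Nat.card (M ⧸ K) with hm
  set r := Nat.card K with hr
  have hmul : m * r = p * q := by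
    rw [← hcard, hm, hr]
    exact (Subgroup.card_eq_card_quotient_mul_card_subgroup K).symm
  have hr1 : r ≠ 1 := fun h => hbot (Subgroup.card_eq_one.mp h)
  have hm1 : m ≠ 1 := by
    intro h
    apply htop
    apply (Subgroup.card_eq_iff_eq_top _).mp
    have h2 : r = p * q := by rw [← hmul, h, one_mul]
    rw [hcard, ← hr, h2]
  have hpq0 : p * q ≠ 0 := Nat.mul_ne_zero hp.ne_zero hq.ne_zero
  have hmdvd : m ∣ p * q := ⟨r, hmul.symm⟩
  have hmpq : m ≠ p * q := by
    intro h
    apply hr1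
    have h2 := hmul
    rw [h] at h2
    exact Nat.eq_of_mul_eq_mul_left (Nat.pos_of_ne_zero hpq0) (h2.trans (mul_one _).symm)
  have hcases : m = p ∨ m = q := by
    by_cases hpm : p ∣ m
    · obtain ⟨c, hc'⟩ := hpm
      have hc : c ∣ q := by
        have h1 : p * c ∣ p * q := hc' ▸ hmdvd
        exact (mul_dvd_mul_iff_left (Nat.Prime.ne_zero hp)).mp h1
      rcases (Nat.Prime.eq_one_or_self_of_dvd hq _ hc) with h | h
      · left; rw [hc', h, mul_one]
      · exact absurd (by rw [hc', h]) hmpq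
    · right
      have hcop : Nat.Coprime m p := ((Nat.Prime.coprime_iff_not_dvd hp).mpr hpm).symm
      have hmq : m ∣ q := hcop.dvd_of_dvd_mul_left hmdvd
      rcases (Nat.Prime.eq_one_or_self_of_dvd hq _ hmq) with h | h
      · exact absurd h hm1
      · exact h
  -- conclude `m` is prime and `r` is the other prime, coprime to `m`
  have hmr : m.Prime ∧ Nat.Coprime r m := by
    rcases hcases with h | h
    · refine ⟨h ▸ hp, ?_⟩
      have : r = q := by
        apply Nat.eq_of_mul_eq_mul_left hp.pos
        calc p * r = m * r := by rw [h]
          _ = p * q := hmul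
      rw [this, h]
      exact (Nat.coprime_primes hq hp).mpr hne.symm
    · refine ⟨h ▸ hq, ?_⟩
      have : r = p := by
        apply Nat.eq_of_mul_eq_mul_left hq.pos
        calc q * r = m * r := by rw [h]
          _ = p * q := hmul
          _ = q * p := Nat.mul_comm p q
      rw [this, h]
      exact (Nat.coprime_primes hp hq).mpr hne
  -- θ is constant by the prime case
  have hθconst : ∀ z w, θ z = θ w := const_of_prime θ hfθ hgenθ hmr.1
  set s := f 1 with hs
  have hcst : ∀ x : M, s⁻¹ * f x ∈ K := by
    intro x
    have h1 := hθconst (π x) (π 1)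
    rw [hθ, hθ] at h1
    have h2 : (f x)⁻¹ * f 1 ∈ K := (QuotientGroup.eq (s := K)).mp h1
    have h3 := K.inv_mem h2
    rwa [mul_inv_rev, inv_inv] at h3
  have rearr : ∀ c y : M, (s⁻¹ * c) * (s * y) = c * y := by
    intro c y
    rw [mul_assoc, mul_left_comm c s y, inv_mul_cancel_left]
  have hshift : ∀ x y : M, f (f x * y) = f (s * y) := by
    intro x y
    have h2 := (hcst x) (s * y)
    rw [rearr] at h2
    exact h2
  have hstar : ∀ x y, f (s * y) * f x = f (s * x) * f y := by
    intro x y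
    have h1 := hf x y
    rwa [hshift x y, hshift y x] at h1
  set d := f s * s⁻¹ with hd
  have hdmul : ∀ x, f (s * x) = d * f x := by
    intro x
    have h1 := hstar x 1
    rw [mul_one, ← hs] at h1
    -- h1 : f s * f x = f (s * x) * s
    have h2 : f (s * x) = f s * f x * s⁻¹ := eq_mul_inv_of_mul_eq h1.symm
    rw [h2, mul_right_comm, ← hd]
  have hdK : d ∈ K := by
    have := hcst s
    rwa [hd, mul_comm]
  have hpow : ∀ k : ℕ, f (s ^ k) = d ^ k * s := by
    intro k
    induction k with
    | zero => rw [pow_zero, pow_zero, one_mul, hs]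
    | succ k ih =>
      rw [pow_succ', hdmul, ih, ← mul_assoc, ← pow_succ']
  have hsm : s ^ m ∈ K := by
    have h1 : (π s) ^ m = 1 := pow_card_eq_one'
    rw [← map_pow] at h1
    exact (QuotientGroup.eq_one_iff _).mp h1
  have hdm : d ^ m = 1 := by
    have h1 : f (s ^ m) = s := by
      have := hsm 1
      rwa [mul_one, ← hs] at this
    have h2 := hpow m
    rw [h1] at h2
    exact (right_eq_mul.mp h2)
  have hdr : d ^ r = 1 := by
    have h1 : orderOf d ∣ r := K.orderOf_dvd_natCard hdK
    exact orderOf_dvd_iff_pow_eq_one.mp h1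
  have hd1 : d = 1 := by
    have h1 : orderOf d ∣ m := orderOf_dvd_of_pow_eq_one hdm
    have h2 : orderOf d ∣ r := orderOf_dvd_of_pow_eq_one hdr
    have h3 : orderOf d ∣ Nat.gcd r m := Nat.dvd_gcd h2 h1
    rw [hmr.2] at h3
    exact orderOf_eq_one_iff.mp (Nat.eq_one_of_dvd_one h3)
  have hsK : s ∈ K := by
    intro x
    rw [hdmul x, hd1, one_mul]
  apply htop
  have hran : ∀ x, f x ∈ K := by
    intro x
    have := K.mul_mem hsK (hcst x)
    rwa [mul_inv_cancel_left] at this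
  have : Set.range f ⊆ (perK f : Set M) := by
    rintro _ ⟨x, rfl⟩; exact hran x
  exact eq_top_iff.mpr (hgen ▸ (Subgroup.closure_le _).mpr this)

end Aux

/-- A finite indecomposable cycle set of cardinality `pq` (`p < q` primes)
with cyclic permutation group has multipermutational level 1. -/
theorem stmt13 {X : Type*} [Finite X] (S : CycleSet X) (p q : ℕ)
    (hp : p.Prime) (hq : q.Prime) (hpq : p < q)
    (hcard : Nat.card X = p * q) (htr : S.Transitive)
    (hcyc : IsCyclic S.permGroup) :
    S.MultipermLevel 1 := by
  classical
  set G := S.permGroup with hG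
  -- commutativity
  have hcomm : ∀ a b : G, a * b = b * a := by
    obtain ⟨gen, hgen'⟩ := hcyc.exists_generator
    intro a b
    obtain ⟨ma, rfl⟩ := hgen' a
    obtain ⟨mb, rfl⟩ := hgen' b
    rw [← zpow_add, ← zpow_add, add_comm]
  letI : CommGroup G := { (inferInstance : Group G) with mul_comm := hcomm }
  -- nonempty
  have hX1 : 1 < Nat.card X := by
    rw [hcard]; nlinarith [hp.two_le, hq.two_le]
  have hne : Nonempty X := by
    rcases isEmpty_or_nonempty X with h | h
    · exfalso; rw [Nat.card_of_isEmpty] at hX1; omega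
    · exact h
  obtain ⟨x₀⟩ := hne
  -- the orbit map is bijective (regularity)
  let β : G → X := fun g => g.1 x₀
  have hβsurj : Function.Surjective β := by
    intro y
    obtain ⟨g, hg, hgy⟩ := htr x₀ y
    exact ⟨⟨g, hg⟩, hgy⟩
  have hβinj : Function.Injective β := by
    intro g h hgh
    have hk : ∀ y : X, (h⁻¹ * g).1 y = y := by
      intro y
      obtain ⟨m, rfl⟩ := hβsurj y
      have h1 : ((h⁻¹ * g) * m) = m * (h⁻¹ * g) := hcomm _ _
      have h2 : (h⁻¹ * g).1 (m.1 x₀) = ((h⁻¹ * g) * m).1 x₀ := rfl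
      rw [h1] at h2
      have h3 : (m * (h⁻¹ * g)).1 x₀ = m.1 ((h⁻¹ * g).1 x₀) := rfl
      have h4 : (h⁻¹ * g).1 x₀ = x₀ := by
        have : (h⁻¹ * g).1 x₀ = h⁻¹.1 (g.1 x₀) := rfl
        rw [this, show (g.1 x₀ : X) = h.1 x₀ from hgh]
        exact (h.1).symm_apply_apply x₀ -- h⁻¹ (h x₀) = x₀
      rw [h2, h3, h4]
    have h5 : h⁻¹ * g = 1 := by
      apply Subtype.ext
      apply Equiv.ext
      intro y
      exact hk y
    have h6 : h * (h⁻¹ * g) = h * 1 := by rw [h5]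
    rw [mul_inv_cancel_left, mul_one] at h6
    exact h6
  have hβ : Function.Bijective β := ⟨hβinj, hβsurj⟩
  -- σ lands in G
  have hσmem : ∀ x : X, S.σ x ∈ G := fun x =>
    Subgroup.subset_closure (Set.mem_range_self x)
  -- the structure map on G
  let f : G → G := fun g => ⟨S.σ (β g), hσmem _⟩
  have hf : ∀ g k : G, f (f g * k) * f g = f (f k * g) * f k := by
    intro g k
    apply Subtype.ext
    apply Equiv.ext
    intro z
    have e1 : β (f g * k) = S.σ (β g) (β k) := rfl
    have e2 : β (f k * g) = S.σ (β k) (β g) := rfl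
    show (S.σ (β (f g * k)) * S.σ (β g)) z = (S.σ (β (f k * g)) * S.σ (β k)) z
    rw [e1, e2]
    exact S.cycl (β g) (β k) z
  have hcardG : Nat.card G = p * q := by
    rw [Nat.card_eq_of_bijective β hβ, hcard]
  have hgenf : Subgroup.closure (Set.range f) = ⊤ := by
    rw [eq_top_iff]
    intro g _
    set H : Subgroup G := Subgroup.closure (Set.range f) with hH
    have hrange : Set.range S.σ ⊆ (Subgroup.map G.subtype H : Set (Equiv.Perm X)) := by
      rintro _ ⟨x, rfl⟩
      obtain ⟨g', hg'⟩ := hβsurj x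
      refine ⟨f g', Subgroup.subset_closure (Set.mem_range_self g'), ?_⟩
      show S.σ (β g') = S.σ x
      rw [hg']
    have hle : G ≤ Subgroup.map G.subtype H := by
      show Subgroup.closure (Set.range S.σ) ≤ Subgroup.map G.subtype H
      exact (Subgroup.closure_le _).mpr hrange
    have hg2 : (g : Equiv.Perm X) ∈ Subgroup.map G.subtype H := hle g.2
    obtain ⟨h', hh', hh'g⟩ := hg2
    have : h' = g := Subtype.ext hh'g
    rwa [this] at hh'
  -- f is constant
  have hconst : ∀ g h : G, f g = f h :=
    const_of_pq p q hp hq (Nat.ne_of_lt hpq) hcardG f hf hgenf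
  have hσconst : ∀ x y : X, S.σ x = S.σ y := by
    intro x y
    obtain ⟨g, rfl⟩ := hβsurj x
    obtain ⟨h, rfl⟩ := hβsurj y
    exact congrArg Subtype.val (hconst g h)
  constructor
  · intro x y
    intro z
    show S.σ x z = S.σ y z
    rw [hσconst x y]
  · intro k hk
    interval_cases k
    intro hall
    have : ∀ x y : X, x = y := hall
    have hsub : Subsingleton X := ⟨this⟩
    have h1 : Nat.card X = 1 := Nat.card_eq_one_iff_unique.mpr ⟨hsub, ⟨x₀⟩⟩
    omega
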